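/- Let $w_+, w_- \in \mathbb{C} \setminus \{0\}$ be nonzero complex numbers such that the angle between $w_+$ and $w_-$ (as vectors in $\mathbb{R}^2$) does not exceed $\theta$ for some $0 \le \theta < \pi$. Then $w = w_+ + w_- \ne 0$ and $\frac{|w_+| + |w_-|}{|w|} \le \frac{1}{\cos(\theta/2)}$. -/

import Mathlib

noncomputable def cangle (u v : ℂ) : ℝ :=
  Real.arccos ((u * (starRingEnd ℂ) v).re / (‖u‖ * ‖v‖))

theorem stmt0 (θ : ℝ) (hθ0 : 0 ≤ θ) (hθπ : θ < Real.pi)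
    (wp wm : ℂ) (hwp : wp ≠ 0) (hwm : wm ≠ 0)
    (hang : cangle wp wm ≤ θ) :
    wp + wm ≠ 0 ∧
      (‖wp‖ + ‖wm‖) / ‖wp + wm‖ ≤ 1 / Real.cos (θ / 2) := by
  set a := ‖wp‖ with ha
  set b := ‖wm‖ with hb
  have ha0 : 0 < a := norm_pos_iff.mpr hwp
  have hb0 : 0 < b := norm_pos_iff.mpr hwm
  set r := (wp * (starRingEnd ℂ) wm).re with hr
  -- |r| ≤ a*b
  have habs : |r| ≤ a * b := by
    calc |r| ≤ ‖wp * (starRingEnd ℂ) wm‖ := Complex.abs_re_le_norm _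
    _ = a * b := by simp [ha, hb]
  have hx1 : -1 ≤ r / (a * b) := by
    rw [le_div_iff₀ (by positivity)]
    nlinarith [abs_le.mp habs]
  have hx2 : r / (a * b) ≤ 1 := by
    rw [div_le_one (by positivity)]
    nlinarith [abs_le.mp habs]
  -- cos θ ≤ r/(ab)
  have hcos : Real.cos θ ≤ r / (a * b) := by
    calc Real.cos θ ≤ Real.cos (cangle wp wm) := by
          have h2 := Real.cos_le_cos_of_nonneg_of_le_pi (Real.arccos_nonneg _)
            (le_of_lt hθπ) hang
          exact h2
      _ = r / (a * b) := Real.cos_arccos hx1 hx2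
  have hcosr : a * b * Real.cos θ ≤ r := by
    rw [le_div_iff₀ (by positivity)] at hcos
    linarith
  have hcosθ : -1 < Real.cos θ := by
    have := Real.cos_lt_cos_of_nonneg_of_le_pi hθ0 le_rfl hθπ
    simpa [Real.cos_pi] using this
  have hnormsq : ‖wp + wm‖ ^ 2 = a ^ 2 + b ^ 2 + 2 * r := by
    rw [Complex.sq_norm, Complex.normSq_add, ha, hb, Complex.sq_norm, Complex.sq_norm]
  have hwpos : 0 < ‖wp + wm‖ := by
    have h2 : 0 < ‖wp + wm‖ ^ 2 := by
      nlinarith [sq_nonneg (a - b), mul_pos ha0 hb0, mul_lt_mul_of_pos_left hcosθ (mul_pos ha0 hb0)]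
    nlinarith [norm_nonneg (wp + wm), h2]
  have hne : wp + wm ≠ 0 := by
    intro h; rw [h] at hwpos; simp at hwpos
  refine ⟨hne, ?_⟩
  have hhalf : 0 < Real.cos (θ / 2) := by
    apply Real.cos_pos_of_mem_Ioo
    constructor <;> [linarith [Real.pi_pos]; linarith]
  rw [div_le_div_iff₀ hwpos hhalf]
  have hsq : Real.cos (θ / 2) ^ 2 = 1 / 2 + Real.cos θ / 2 := by
    have h := Real.cos_sq (θ / 2)
    rwa [show (2:ℝ) * (θ / 2) = θ by ring] at h
  nlinarith [sq_nonneg (a - b), sq_nonneg ((a + b) * Real.cos (θ/2) - ‖wp + wm‖),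
    mul_pos hwpos hhalf, hwpos.le, hhalf.le]
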